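/- In the category Set, the cofork on the parallel pair consisting of the two identity maps on a one-element set {*}, with apex {*} and both structure maps the identity, is a coequalizer but is not a Van Kampen cocone: the cartesian natural transformation from the parallel pair (k, id) on a two-element set {a,b} (k the non-identity bijection) down to the pair (id, id) on {*} has colimit a one-element set, and pulling the induced map back along the coequalizer cocone does not recover the original cartesian transformation. -/

import Mathlib

open CategoryTheory CategoryTheory.Limits

universe u

/-- A directed multigraph. -/
structure MGraph : Type (u + 1) where
  V : Type u
  E : Type u
  s : E → V
  t : E → V

/-- A diagram of shape a directed multigraph `I` in a category `C`
(a graph morphism into the underlying graph of `C`). -/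
structure GDiagram (I : MGraph.{u}) (C : Type*) [Category C] where
  obj : I.V → C
  map : (e : I.E) → obj (I.s e) ⟶ obj (I.t e)

section Core

variable {I : MGraph.{u}} {C : Type*} [Category C]

/-- A natural transformation between diagrams of shape `I`. -/
@[ext]
structure GHom (F G : GDiagram I C) where
  app : (i : I.V) → F.obj i ⟶ G.obj i
  naturality : ∀ e : I.E, F.map e ≫ app (I.t e) = app (I.s e) ≫ G.map e

/-- A transformation is cartesian if all its naturality squares are pullbacks. -/
def GHom.Cartesian {F G : GDiagram I C} (τ : GHom F G) : Prop :=
  ∀ e : I.E, IsPullback (F.map e) (τ.app (I.s e)) (τ.app (I.t e)) (G.map e)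

/-- An object of the category `C^I ⇓ D` of cartesian transformations into `D`. -/
structure CartObj (D : GDiagram I C) where
  diag : GDiagram I C
  hom : GHom diag D
  cart : hom.Cartesian

instance cartObjCategory (D : GDiagram I C) : Category (CartObj D) where
  Hom A B := { φ : GHom A.diag B.diag // ∀ i, φ.app i ≫ B.hom.app i = A.hom.app i }
  id A := ⟨⟨fun _ => 𝟙 _, fun e => by simp⟩, fun i => by simp⟩
  comp {A B C'} φ ψ :=
    ⟨⟨fun i => φ.1.app i ≫ ψ.1.app i, fun e => by
        rw [← Category.assoc, φ.1.naturality, Category.assoc, ψ.1.naturality, ← Category.assoc]⟩,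
      fun i => by rw [Category.assoc, ψ.2 i, φ.2 i]⟩
  id_comp f := Subtype.ext (GHom.ext (funext fun i => Category.id_comp _))
  comp_id f := Subtype.ext (GHom.ext (funext fun i => Category.comp_id _))
  assoc f g h := Subtype.ext (GHom.ext (funext fun i => Category.assoc _ _ _))

/-- A commutative cocone under a diagram of shape `I`. -/
structure GCocone (D : GDiagram I C) where
  pt : C
  leg : (i : I.V) → D.obj i ⟶ pt
  comm : ∀ e : I.E, D.map e ≫ leg (I.t e) = leg (I.s e)

/-- A cocone is colimiting if every cocone factors uniquely through it. -/
def GCocone.IsColimit {D : GDiagram I C} (c : GCocone D) : Prop :=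
  ∀ c' : GCocone D, ∃! f : c.pt ⟶ c'.pt, ∀ i, c.leg i ≫ f = c'.leg i

/-- The Van Kampen property of a cocone `c`: the functor `κ*`, given by pulling back
objects of the slice category over the apex along all the cocone legs, is an
equivalence between the slice category and the category of cartesian natural
transformations into `D`.  (We phrase this as: there is an equivalence `F` which is,
objectwise and morphismwise, given by pullback along the legs.) -/
def GCocone.IsVanKampen {D : GDiagram I C} (c : GCocone D) : Prop :=
  ∃ (F : Over c.pt ⥤ CartObj D)
    (π : (σ : Over c.pt) → (i : I.V) → ((F.obj σ).diag.obj i ⟶ σ.left)),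
    (∀ (σ : Over c.pt) (i : I.V),
        IsPullback (π σ i) ((F.obj σ).hom.app i) σ.hom (c.leg i)) ∧
    (∀ {σ σ' : Over c.pt} (γ : σ ⟶ σ') (i : I.V),
        ((F.map γ).1.app i) ≫ π σ' i = π σ i ≫ γ.left) ∧
    F.IsEquivalence

end Core
section Shapes

/-- Vertices of the span shape graph `1 ← 0 → 2`. -/
inductive SpV : Type u | z | p | q

/-- Edges of the span shape graph. -/
inductive SpE : Type u | l | r

/-- The span shape graph `1 ←l− 0 −r→ 2`. -/
def spanGraph : MGraph.{u} :=
  ⟨SpV, SpE, fun _ => .z, fun e => match e with | .l => .p | .r => .q⟩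

/-- The span diagram determined by `h₁ : D0 ⟶ D1` and `h₂ : D0 ⟶ D2`. -/
def spanDiagram {C : Type*} [Category C] {D0 D1 D2 : C} (h₁ : D0 ⟶ D1) (h₂ : D0 ⟶ D2) :
    GDiagram spanGraph.{u} C where
  obj v := match v with | .z => D0 | .p => D1 | .q => D2
  map e := match e with | .l => h₁ | .r => h₂

/-- Vertices of the parallel pair shape graph `1 ⇉ 2`. -/
inductive PV : Type u | one | two

/-- Edges of the parallel pair shape graph `1 ⇉ 2`. -/
inductive PE : Type u | d | d'

/-- The parallel pair shape graph `Δ = (1 ⇉ 2)` with edges `d`, `d'`. -/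
def parGraph : MGraph.{u} := ⟨PV, PE, fun _ => .one, fun _ => .two⟩

/-- The parallel pair diagram determined by `f g : A ⟶ A'` (`d ↦ f`, `d' ↦ g`). -/
def parDiagram {C : Type*} [Category C] {A A' : C} (f g : A ⟶ A') :
    GDiagram parGraph.{u} C where
  obj v := match v with | .one => A | .two => A'
  map e := match e with | .d => f | .d' => g

end Shapes

/-- If a square is a pullback and its bottom map is an iso, then its top map is an iso. -/
lemma isIso_fst_of_isPullback_aux {C : Type*} [Category C] {P X Y Z : C}
    {fst : P ⟶ X} {snd : P ⟶ Y} {f : X ⟶ Z} {g : Y ⟶ Z} (hg : IsIso g)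
    (h : IsPullback fst snd f g) : IsIso fst := by
  haveI := hg
  have h' : IsPullback (𝟙 X) (f ≫ inv g) f g :=
    IsPullback.of_horiz_isIso ⟨by simp⟩
  have heq : (h.isoIsPullback _ _ h').hom = fst := by
    simpa using h.isoIsPullback_hom_fst _ _ h'
  rw [← heq]; infer_instance

lemma bool_not_pairwise {b1 b2 b3 : Bool} (h12 : b1 ≠ b2) (h13 : b1 ≠ b3) (h23 : b2 ≠ b3) :
    False := by cases b1 <;> cases b2 <;> cases b3 <;> simp_all

/-- **A coequalizer in `Set` which is not Van Kampen** (the example (3.3) of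
Sect. 3.1).  In `Set`, the cofork on the parallel pair of identities on the
one-element set, with apex the one-element set and identity structure maps, is a
coequalizer but not a Van Kampen cocone: the cartesian transformation from the
parallel pair `(k, id)` on the two-element set (`k` the non-identity bijection) has
colimit a one-element set, and pulling the induced map back along the coequalizer
cocone does not recover the original cartesian transformation. -/
theorem set_coequalizer_identities_not_vanKampen
    (c : GCocone (parDiagram.{0} (𝟙 PUnit) (𝟙 PUnit)))
    (hc : c = { pt := PUnit,
                leg := fun v => match v with
                  | .one => TypeCat.ofHom (fun _ => PUnit.unit)
                  | .two => TypeCat.ofHom (fun _ => PUnit.unit),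
                comm := fun e => match e with | .d => rfl | .d' => rfl })
    (τ : GHom (parDiagram (TypeCat.ofHom (fun b : Bool => !b)) (𝟙 Bool))
              (parDiagram (𝟙 PUnit) (𝟙 PUnit)))
    (hτ : τ = { app := fun v => match v with
                  | .one => TypeCat.ofHom (fun _ => PUnit.unit)
                  | .two => TypeCat.ofHom (fun _ => PUnit.unit),
                naturality := fun e => match e with | .d => rfl | .d' => rfl }) :
    c.IsColimit ∧ ¬ c.IsVanKampen ∧ τ.Cartesian ∧
    (∃ cE : GCocone (parDiagram (TypeCat.ofHom (fun b : Bool => !b)) (𝟙 Bool)),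
        cE.IsColimit ∧ Nonempty (cE.pt ≃ PUnit)) ∧
    (∀ cE : GCocone (parDiagram (TypeCat.ofHom (fun b : Bool => !b)) (𝟙 Bool)), cE.IsColimit →
      ∀ u : cE.pt ⟶ c.pt, (∀ i, cE.leg i ≫ u = τ.app i ≫ c.leg i) →
        ¬ (IsPullback (cE.leg PV.one) (τ.app PV.one) u (c.leg PV.one) ∧
           IsPullback (cE.leg PV.two) (τ.app PV.two) u (c.leg PV.two))) := by
  subst hc; subst hτ
  -- the map `!` is an isomorphism in `Type`
  haveI notIso : IsIso (TypeCat.ofHom (fun b : Bool => !b)) :=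
    (isIso_iff_bijective _).mpr
      ⟨fun x y h => by simpa using congrArg (fun z => !z) h, fun y => ⟨!y, by simp⟩⟩
  haveI constIso : IsIso (TypeCat.ofHom (fun _ => PUnit.unit) : PUnit ⟶ PUnit) :=
    (isIso_iff_bijective _).mpr ⟨fun x y _ => by cases x; cases y; rfl, fun y => ⟨PUnit.unit, by cases y; rfl⟩⟩
  -- τ is cartesian
  have hcart : GHom.Cartesian
      (⟨fun v => match v with
          | PV.one => TypeCat.ofHom (fun _ => PUnit.unit)
          | PV.two => TypeCat.ofHom (fun _ => PUnit.unit),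
        fun e => match e with | PE.d => rfl | PE.d' => rfl⟩ :
        GHom (parDiagram (TypeCat.ofHom (fun b : Bool => !b)) (𝟙 Bool))
          (parDiagram (𝟙 PUnit) (𝟙 PUnit))) := by
    intro e
    cases e with
    | d =>
      show IsPullback (TypeCat.ofHom (fun b : Bool => !b))
        (TypeCat.ofHom (fun _ => PUnit.unit) : Bool ⟶ PUnit)
        (TypeCat.ofHom (fun _ => PUnit.unit) : Bool ⟶ PUnit) (𝟙 PUnit)
      exact IsPullback.of_horiz_isIso ⟨rfl⟩
    | d' =>
      show IsPullback (𝟙 Bool) (TypeCat.ofHom (fun _ => PUnit.unit) : Bool ⟶ PUnit)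
        (TypeCat.ofHom (fun _ => PUnit.unit) : Bool ⟶ PUnit) (𝟙 PUnit)
      exact IsPullback.of_horiz_isIso ⟨rfl⟩
  refine ⟨?_, ?_, hcart, ?_, ?_⟩
  · -- the cocone is a coequalizer
    intro c'
    have k1 : ∀ x, c'.leg PV.two x = c'.leg PV.one x := fun x => types_congr_hom (c'.comm PE.d') x
    refine ⟨TypeCat.ofHom (fun _ => c'.leg PV.two PUnit.unit), fun i => ?_, fun y hy => ?_⟩
    · cases i with
      | one => ext x; cases x; exact k1 _
      | two => ext x; cases x; rfl
    · ext x; cases x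
      exact types_congr_hom (hy PV.two) PUnit.unit
  · -- not Van Kampen
    rintro ⟨F, π, hπ, hmap, hequiv⟩
    haveI := hequiv
    let T : CartObj (parDiagram.{0} (𝟙 PUnit) (𝟙 PUnit)) :=
      ⟨parDiagram (TypeCat.ofHom (fun b : Bool => !b)) (𝟙 Bool),
        ⟨fun v => match v with
            | PV.one => TypeCat.ofHom (fun _ => PUnit.unit)
            | PV.two => TypeCat.ofHom (fun _ => PUnit.unit),
          fun e => match e with | PE.d => rfl | PE.d' => rfl⟩, hcart⟩
    let σ := F.objPreimage T
    let e : F.obj σ ≅ T := F.objObjPreimageIso T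
    -- `π σ PV.two` is an isomorphism
    haveI : IsIso (π σ PV.two) := isIso_fst_of_isPullback_aux constIso (hπ σ PV.two)
    -- the component of `e` at `PV.two` is an isomorphism
    let a : (F.obj σ).diag.obj PV.two ⟶ Bool := e.hom.1.app PV.two
    let b : Bool ⟶ (F.obj σ).diag.obj PV.two := e.inv.1.app PV.two
    have hab : a ≫ b = 𝟙 _ := congrArg (fun ψ => ψ.1.app PV.two) e.hom_inv_id
    have hba : b ≫ a = 𝟙 _ := congrArg (fun ψ => ψ.1.app PV.two) e.inv_hom_id
    let β : σ.left ≃ Bool :=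
      ((asIso (π σ PV.two)).toEquiv.symm.trans (Iso.mk a b hab hba).toEquiv)
    -- endomorphisms of T are determined by their value at `true`
    have hdet : ∀ χ χ' : T ⟶ T,
        χ.1.app PV.two true = χ'.1.app PV.two true → χ = χ' := by
      intro χ χ' h
      have h2 : ∀ (ψ : T ⟶ T) (x : Bool), ψ.1.app PV.two (!x) = !(ψ.1.app PV.one x) :=
        fun ψ x => types_congr_hom (ψ.1.naturality PE.d) x
      have h1 : ∀ (ψ : T ⟶ T) (x : Bool), ψ.1.app PV.two x = ψ.1.app PV.one x :=
        fun ψ x => types_congr_hom (ψ.1.naturality PE.d') x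
      have happ2 : χ.1.app PV.two = χ'.1.app PV.two := by
        refine ConcreteCategory.hom_ext _ _ fun x => ?_
        cases x with
        | true => exact h
        | false =>
          have e1 : χ.1.app PV.two false = !(χ.1.app PV.two true) := by
            have := h2 χ true; rw [← h1 χ true] at this; simpa using this
          have e2 : χ'.1.app PV.two false = !(χ'.1.app PV.two true) := by
            have := h2 χ' true; rw [← h1 χ' true] at this; simpa using this
          rw [e1, e2, h]
      have happ1 : χ.1.app PV.one = χ'.1.app PV.one := by
        refine ConcreteCategory.hom_ext _ _ fun x => ?_
        rw [← h1 χ x, ← h1 χ' x, happ2]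
      apply Subtype.ext
      apply GHom.ext
      funext i
      cases i with
      | one => exact happ1
      | two => exact happ2
    -- the comparison map into endomorphisms of T
    let G : (σ ⟶ σ) → Bool := fun φ => (e.inv ≫ F.map φ ≫ e.hom).1.app PV.two true
    have Ginj : ∀ φ ψ : σ ⟶ σ, G φ = G ψ → φ = ψ := by
      intro φ ψ h
      have hΦ : e.inv ≫ F.map φ ≫ e.hom = e.inv ≫ F.map ψ ≫ e.hom := hdet _ _ h
      have : F.map φ = F.map ψ := by
        simpa using congrArg (fun χ => e.hom ≫ χ ≫ e.inv) hΦ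
      exact F.map_injective this
    -- three distinct endomorphisms of σ
    let mk : (σ.left → σ.left) → (σ ⟶ σ) := fun u =>
      Over.homMk (TypeCat.ofHom u) (by
        ext x)
    have hne : ∀ (u v : σ.left → σ.left) (x : σ.left), u x ≠ v x → mk u ≠ mk v :=
      fun u v x h heq => h (types_congr_hom (congrArg CommaMorphism.left heq) x)
    have hβ : Function.Injective β.symm := β.symm.injective
    have htf : (true : Bool) ≠ false := by simp
    let f1 : σ.left → σ.left := fun x => x
    let f2 : σ.left → σ.left := fun x => β.symm (!(β x))
    let f3 : σ.left → σ.left := fun _ => β.symm true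
    have d12 : mk f1 ≠ mk f2 := by
      refine hne f1 f2 (β.symm true) ?_
      show β.symm true ≠ β.symm (!(β (β.symm true)))
      rw [Equiv.apply_symm_apply]
      intro h; exact htf (hβ h)
    have d13 : mk f1 ≠ mk f3 := by
      refine hne f1 f3 (β.symm false) ?_
      show β.symm false ≠ β.symm true
      intro h; exact htf (hβ h.symm)
    have d23 : mk f2 ≠ mk f3 := by
      refine hne f2 f3 (β.symm true) ?_
      show β.symm (!(β (β.symm true))) ≠ β.symm true
      rw [Equiv.apply_symm_apply]
      intro h; exact htf (hβ h).symm
    exact bool_not_pairwise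
      (fun h => d12 (Ginj _ _ h)) (fun h => d13 (Ginj _ _ h)) (fun h => d23 (Ginj _ _ h))
  · -- the coequalizer of (not, id) exists and has a one-element apex
    refine ⟨⟨PUnit, fun _ => TypeCat.ofHom (fun _ => PUnit.unit), fun e => rfl⟩, ?_, ⟨Equiv.punitEquivPUnit⟩⟩
    intro c'
    have k1 : ∀ x, c'.leg PV.two x = c'.leg PV.one x := fun x => types_congr_hom (c'.comm PE.d') x
    have k2 : ∀ x : Bool, c'.leg PV.two (!x) = c'.leg PV.one x :=
      fun x => types_congr_hom (c'.comm PE.d) x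
    have k3 : c'.leg PV.two false = c'.leg PV.two true := (k2 true).trans (k1 true).symm
    refine ⟨TypeCat.ofHom (fun _ => c'.leg PV.two true), fun i => ?_, fun y hy => ?_⟩
    · ext x
      cases i with
      | one =>
        show c'.leg PV.two true = c'.leg PV.one x
        rw [← k1 x]
        cases x with
        | true => rfl
        | false => exact k3.symm
      | two =>
        show c'.leg PV.two true = c'.leg PV.two x
        cases x with
        | true => rfl
        | false => exact k3.symm
    · ext x; cases x
      exact types_congr_hom (hy PV.two) true
  · -- the pullback condition fails
    rintro cE _ u _ ⟨_, hpb⟩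
    haveI : IsIso (cE.leg PV.two) := isIso_fst_of_isPullback_aux constIso hpb
    have hinj : Function.Injective (cE.leg PV.two) :=
      ((isIso_iff_bijective _).mp this).1
    have e1 : cE.leg PV.two false = cE.leg PV.one true := types_congr_hom (cE.comm PE.d) true
    have e2 : cE.leg PV.two true = cE.leg PV.one true := types_congr_hom (cE.comm PE.d') true
    exact absurd (hinj (e1.trans e2.symm)) (by simp)
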